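/- Let F_{n,1} be the n×n matrix with F(i,j) = -1 if i = j+1, F(i,j) = 1 if j ≥ i, else 0. The number of weak compositions of n-k with exactly k parts equal to 0 equals the sum of all principal minors of order n-k of F_{n,1}. -/

import Mathlib

/-- The `n × n` Hessenberg matrix `F_{n,1}` with entries `-1` when `i = j + 1`,
`1` when `j ≥ i`, and `0` otherwise. -/
def F1 (n : ℕ) : Matrix (Fin n) (Fin n) ℤ := fun i j =>
  if (i : ℕ) = (j : ℕ) + 1 then -1
  else if (i : ℕ) ≤ (j : ℕ) then 1
  else 0


def Hm (m : ℕ) (v : ℕ → ℤ) : Matrix (Fin m) (Fin m) ℤ :=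
  Matrix.of fun i j => if (i : ℕ) ≤ (j : ℕ) then 1
    else if (i : ℕ) = (j : ℕ) + 1 then v j else 0

theorem det_Hm (m : ℕ) (v : ℕ → ℤ) :
    (Hm m v).det = ∏ t ∈ Finset.range (m - 1), (1 - v t) := by
  induction m generalizing v with
  | zero => simp [Matrix.det_fin_zero]
  | succ m ih =>
    match m with
    | 0 => simp [Hm, Matrix.det_fin_one]
    | m + 1 =>
      rw [Matrix.det_succ_column_zero]
      rw [Fin.sum_univ_succ, Fin.sum_univ_succ]
      have hz : ∀ i : Fin m, ((Hm (m+2) v) i.succ.succ 0) = 0 := by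
        intro i
        simp only [Hm, Matrix.of_apply, Fin.val_succ, Fin.val_zero]
        norm_num
      have hsub1 : (Hm (m+2) v).submatrix (Fin.succAbove 0) Fin.succ
          = Hm (m+1) (fun t => v (t+1)) := by
        rw [Fin.succAbove_zero]
        ext i j
        simp only [Matrix.submatrix_apply, Hm, Matrix.of_apply, Fin.val_succ]
        have h1 : ((i:ℕ)+1 ≤ (j:ℕ)+1) ↔ ((i:ℕ) ≤ (j:ℕ)) := by omega
        have h2 : ((i:ℕ)+1 = (j:ℕ)+1+1) ↔ ((i:ℕ) = (j:ℕ)+1) := by omega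
        simp only [h1, h2]
      have hsub2 : (Hm (m+2) v).submatrix (Fin.succAbove (Fin.succ 0)) Fin.succ
          = (Hm (m+2) v).submatrix (Fin.succAbove 0) Fin.succ := by
        ext i j
        simp only [Matrix.submatrix_apply, Fin.succAbove_zero]
        induction i using Fin.cases with
        | zero =>
          have h1 : (Fin.succ (0 : Fin (m+1))).succAbove 0 = 0 := rfl
          rw [h1]
          simp only [Hm, Matrix.of_apply, Fin.val_zero, Fin.val_succ]
          simp
        | succ i =>
          have h1 : (Fin.succ (0 : Fin (m+1))).succAbove i.succ = i.succ.succ := by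
            apply Fin.succAbove_of_le_castSucc
            simp [Fin.le_def]
          rw [h1]
      rw [hsub1, hsub2, hsub1, ih]
      have h00 : Hm (m+2) v 0 0 = 1 := by simp [Hm]
      have h10 : Hm (m+2) v (Fin.succ 0) 0 = v 0 := by simp [Hm]
      rw [h00, h10]
      simp only [hz, mul_zero, zero_mul, Finset.sum_const_zero, add_zero]
      simp only [Nat.add_sub_cancel]
      rw [Finset.prod_range_succ']
      simp only [Fin.val_succ, Fin.val_zero, pow_zero, pow_one]
      ring

def gf (n m : ℕ) (f : Fin m → Fin n) : ℕ → ℕ := fun t =>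
  if h : t < m then (f ⟨t, h⟩ : ℕ) else n + t

theorem F1_minor_eq_Hm (n m : ℕ) (f : Fin m → Fin n) (hf : StrictMono f) :
    (Matrix.of fun i j : Fin m => F1 n (f i) (f j))
      = Hm m (fun t => if gf n m f (t+1) = gf n m f t + 1 then -1 else 0) := by
  ext i j
  simp only [Matrix.of_apply, Hm, F1]
  rcases le_or_gt (i : ℕ) (j : ℕ) with h | h
  · have hle : (f i : ℕ) ≤ (f j : ℕ) := Fin.le_def.mp (hf.monotone (Fin.le_def.mpr h))
    rw [if_pos h]
    split_ifs <;> omega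
  · have hlt : (f j : ℕ) < (f i : ℕ) := Fin.lt_def.mp (hf (Fin.lt_def.mpr h))
    rw [if_neg (by omega : ¬ ((i:ℕ) ≤ (j:ℕ)))]
    rcases eq_or_ne (i : ℕ) ((j : ℕ) + 1) with h2 | h2
    · have hj1 : (j : ℕ) + 1 < m := h2 ▸ i.isLt
      have hij : (⟨(j:ℕ)+1, hj1⟩ : Fin m) = i := Fin.ext h2.symm
      have hfi : gf n m f ((j:ℕ)+1) = (f i : ℕ) := by
        rw [gf]
        simp only [dif_pos hj1, hij]
      have hfj : gf n m f (j:ℕ) = (f j : ℕ) := by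
        rw [gf]
        simp only [dif_pos j.isLt, Fin.eta]
      rw [if_pos h2]
      simp only [hfi, hfj]
      split_ifs <;> omega
    · have hj1 : (j : ℕ) + 1 < m := by omega
      have hs1 : (f ⟨(j:ℕ)+1, hj1⟩ : ℕ) < (f i : ℕ) := Fin.lt_def.mp (hf (Fin.lt_def.mpr (by simp only [Fin.val_mk]; omega)))
      have hs2 : (f j : ℕ) < (f ⟨(j:ℕ)+1, hj1⟩ : ℕ) := Fin.lt_def.mp (hf (Fin.lt_def.mpr (by simp only [Fin.val_mk]; omega)))
      rw [if_neg h2]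
      split_ifs <;> omega


theorem det_F1_minor (n m : ℕ) (f : Fin m → Fin n) (hf : StrictMono f) :
    (Matrix.of fun i j : Fin m => F1 n (f i) (f j)).det
      = 2 ^ (((Finset.range (m-1)).filter
          (fun t => gf n m f (t+1) = gf n m f t + 1)).card) := by
  rw [F1_minor_eq_Hm n m f hf, det_Hm]
  have : ∀ t ∈ Finset.range (m-1),
      (1 - (if gf n m f (t+1) = gf n m f t + 1 then (-1:ℤ) else 0))
        = (if gf n m f (t+1) = gf n m f t + 1 then (2:ℤ) else 1) := by
    intro t _
    split_ifs <;> norm_num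
  rw [Finset.prod_congr rfl this, Finset.prod_ite]
  simp [Finset.prod_const]

/-- number of adjacent pairs in a finset of naturals -/
def aN (S : Finset ℕ) : ℕ := (S.filter (fun i => i + 1 ∈ S)).card


theorem bridge (n m : ℕ) (s : Finset (Fin n)) (h : s.card = m) :
    ((Finset.range (m-1)).filter
        (fun t => gf n m (s.orderEmbOfFin h) (t+1) = gf n m (s.orderEmbOfFin h) t + 1)).card
      = aN (s.image Fin.val) := by
  set f := ⇑(s.orderEmbOfFin h) with hfdef
  have hmono : StrictMono f := (s.orderEmbOfFin h).strictMono
  have hmem : ∀ t : Fin m, f t ∈ s := fun t => Finset.orderEmbOfFin_mem s h t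
  have hsurj : ∀ x ∈ s, ∃ t : Fin m, f t = x := by
    intro x hx
    have : x ∈ Set.range f := by rw [Finset.range_orderEmbOfFin]; exact_mod_cast hx
    exact this
  have hgf : ∀ (t : ℕ) (ht : t < m), gf n m f t = (f ⟨t, ht⟩ : ℕ) := by
    intro t ht; rw [gf]; simp only [dif_pos ht]
  apply Finset.card_bij (fun t _ => gf n m f t)
  · intro t ht
    rw [Finset.mem_filter, Finset.mem_range] at ht
    obtain ⟨ht1, ht2⟩ := ht
    have h1 : t < m := by omega
    have h2 : t + 1 < m := by omega
    rw [Finset.mem_filter]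
    constructor
    · rw [Finset.mem_image]
      exact ⟨f ⟨t, h1⟩, hmem _, (hgf t h1).symm⟩
    · rw [← ht2, hgf (t+1) h2, Finset.mem_image]
      exact ⟨f ⟨t+1, h2⟩, hmem _, rfl⟩
  · intro t1 ht1 t2 ht2 heq
    rw [Finset.mem_filter, Finset.mem_range] at ht1 ht2
    have h1 : t1 < m := by omega
    have h2 : t2 < m := by omega
    rw [hgf t1 h1, hgf t2 h2] at heq
    have := hmono.injective (Fin.ext heq : f ⟨t1,h1⟩ = f ⟨t2,h2⟩)
    exact congrArg Fin.val (by exact_mod_cast this)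
  · intro b hb
    rw [Finset.mem_filter, Finset.mem_image] at hb
    obtain ⟨⟨x, hx, hxb⟩, hb2⟩ := hb
    rw [Finset.mem_image] at hb2
    obtain ⟨y, hy, hyb⟩ := hb2
    obtain ⟨t, hft⟩ := hsurj x hx
    obtain ⟨t', hft'⟩ := hsurj y hy
    have hlt : t < t' := by
      have : f t < f t' := by
        rw [Fin.lt_def, hft, hft', hxb, hyb]; omega
      exact hmono.lt_iff_lt.mp this
    have htm : (t : ℕ) < m - 1 := by
      have := t'.isLt
      have := Fin.lt_def.mp hlt
      omega
    have ht1m : (t : ℕ) + 1 < m := by omega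
    refine ⟨t, ?_, ?_⟩
    · rw [Finset.mem_filter, Finset.mem_range]
      refine ⟨htm, ?_⟩
      rw [hgf _ ht1m, hgf _ t.isLt]
      have e1 : (⟨(t:ℕ), t.isLt⟩ : Fin m) = t := rfl
      rw [e1, hft]
      have hub : (f ⟨(t:ℕ)+1, ht1m⟩ : ℕ) ≤ (f t' : ℕ) := by
        apply Fin.le_def.mp (hmono.monotone _)
        rw [Fin.le_def]
        simpa using Fin.lt_def.mp hlt
      have hlb : (f t : ℕ) < (f ⟨(t:ℕ)+1, ht1m⟩ : ℕ) := by
        apply Fin.lt_def.mp (hmono _)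
        rw [Fin.lt_def]; simp
      rw [hft'] at hub
      rw [hft] at hlb
      omega
    · rw [hgf _ t.isLt]
      have e1 : (⟨(t:ℕ), t.isLt⟩ : Fin m) = t := rfl
      rw [e1, hft, hxb]

theorem det_minor (n m : ℕ) (s : Finset (Fin n)) (h : s.card = m) :
    (Matrix.of (fun a b : {x : Fin n // x ∈ s} => F1 n a.1 b.1)).det
      = 2 ^ aN (s.image Fin.val) := by
  have e := s.orderIsoOfFin h
  rw [← Matrix.det_submatrix_equiv_self (s.orderIsoOfFin h).toEquiv]
  have hmat : (Matrix.of (fun a b : {x : Fin n // x ∈ s} => F1 n a.1 b.1)).submatrix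
        ⇑(s.orderIsoOfFin h).toEquiv ⇑(s.orderIsoOfFin h).toEquiv
      = Matrix.of (fun i j : Fin m => F1 n (s.orderEmbOfFin h i) (s.orderEmbOfFin h j)) := by
    ext i j
    simp only [Matrix.submatrix_apply, Matrix.of_apply]
    rw [show ((s.orderIsoOfFin h).toEquiv i).1 = (s.orderEmbOfFin h i) from
      Finset.coe_orderIsoOfFin_apply s h i,
      show ((s.orderIsoOfFin h).toEquiv j).1 = (s.orderEmbOfFin h j) from
      Finset.coe_orderIsoOfFin_apply s h j]
  rw [hmat, det_F1_minor n m _ (s.orderEmbOfFin h).strictMono, bridge n m s h]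

theorem sum_minors (n m : ℕ) :
    ∑ s ∈ Finset.univ.powersetCard m,
        Matrix.det (Matrix.of (fun a b : {x : Fin n // x ∈ s} => F1 n a.1 b.1))
      = ∑ S ∈ (Finset.range n).powersetCard m, ((2:ℤ) ^ aN S) := by
  apply Finset.sum_bij (fun s _ => s.image Fin.val)
  · intro s hs
    rw [Finset.mem_powersetCard_univ] at hs
    rw [Finset.mem_powersetCard]
    constructor
    · intro x hx
      rw [Finset.mem_image] at hx
      obtain ⟨a, _, rfl⟩ := hx
      exact Finset.mem_range.mpr a.isLt
    · rw [Finset.card_image_of_injective _ Fin.val_injective, hs]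
  · intro s1 _ s2 _ heq
    exact Finset.image_injective Fin.val_injective heq
  · intro S hS
    rw [Finset.mem_powersetCard] at hS
    have hlt : ∀ x ∈ S, x < n := fun x hx => Finset.mem_range.mp (hS.1 hx)
    refine ⟨S.attachFin hlt, ?_, ?_⟩
    · rw [Finset.mem_powersetCard_univ, Finset.card_attachFin, hS.2]
    · ext b
      simp only [Finset.mem_image]
      constructor
      · rintro ⟨a, ha, rfl⟩
        exact (Finset.mem_attachFin _).mp ha
      · intro hb
        exact ⟨⟨b, hlt b hb⟩, (Finset.mem_attachFin _).mpr hb, rfl⟩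
  · intro s hs
    rw [Finset.mem_powersetCard_univ] at hs
    exact det_minor n s.card s rfl

def Q : ℕ → ℕ → ℕ × ℕ
  | 0, 0 => (1, 0)
  | 0, _+1 => (0, 0)
  | _+1, 0 => (1, 0)
  | n+1, m+1 => ((Q n (m+1)).1 + (Q n m).1 + (Q n m).2, (Q n m).1 + (Q n m).2)

theorem Q_zero : ∀ n m : ℕ, n < m → Q n m = (0, 0) := by
  intro n
  induction n with
  | zero => intro m hm; match m, hm with | m+1, _ => rfl
  | succ n ih =>
    intro m hm
    match m, hm with
    | m+1, hm =>
      have h1 := ih (m+1) (by omega)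
      have h2 := ih m (by omega)
      show ((Q n (m+1)).1 + (Q n m).1 + (Q n m).2, (Q n m).1 + (Q n m).2) = (0,0)
      rw [h1, h2]
      rfl

theorem Q_n0 (n : ℕ) : Q n 0 = (1, 0) := by
  match n with
  | 0 => rfl
  | n+1 => rfl

def incHead : List ℕ → List ℕ
  | [] => []
  | h :: t => (h+1) :: t

def FS : ℕ → ℕ → Bool → Finset (List ℕ)
  | 0, _, false => ∅
  | 0, k, true => {List.replicate k 0}
  | m+1, k, false =>
      (FS m k true).image (fun l => 1 :: l) ∪ (FS m k false).image incHead
  | m+1, 0, true => FS (m+1) 0 false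
  | m+1, k+1, true => ((FS (m+1) k true).image (fun l => 0 :: l)) ∪ FS (m+1) (k+1) false
  termination_by m k b => (m, k, if b then 1 else 0)

theorem mem_FS : ∀ (m k : ℕ) (b : Bool) (l : List ℕ), l ∈ FS m k b ↔
    (l.sum = m ∧ l.count 0 = k ∧ (b = false → ∃ h t, l = (h+1) :: t)) := by
  intro m k b
  induction m, k, b using FS.induct with
  | case1 k =>
    intro l
    rw [FS]
    simp only [Finset.notMem_empty, false_iff]
    rintro ⟨hs, -, hh⟩
    obtain ⟨h, t, rfl⟩ := hh (by trivial)
    simp at hs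
  | case2 k =>
    intro l
    rw [FS]
    simp only [Finset.mem_singleton]
    constructor
    · rintro rfl
      refine ⟨by simp, by simp, by simp⟩
    · rintro ⟨hs, hc, -⟩
      have hz : ∀ x ∈ l, x = 0 := List.sum_eq_zero_iff.mp hs
      have hcl : l.count 0 = l.length := List.count_eq_length.mpr (fun b hb => (hz b hb).symm)
      rw [List.eq_replicate_iff]
      exact ⟨by omega, hz⟩
  | case3 m k ih1 ih2 =>
    intro l
    rw [FS]
    simp only [Finset.mem_union, Finset.mem_image]
    constructor
    · rintro (⟨t, ht, rfl⟩ | ⟨l', hl', rfl⟩)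
      · rw [ih1] at ht
        refine ⟨?_, ?_, fun _ => ⟨0, t, rfl⟩⟩
        · simp only [List.sum_cons, ht.1]
          omega
        · rw [List.count_cons]
          simp [ht.2.1]
      · rw [ih2] at hl'
        obtain ⟨hs, hc, hh⟩ := hl'
        obtain ⟨h, t, rfl⟩ := hh (by trivial)
        refine ⟨?_, ?_, fun _ => ⟨h+1, t, rfl⟩⟩
        · simp only [incHead, List.sum_cons] at hs ⊢
          omega
        · simp only [incHead] at hc ⊢
          rw [List.count_cons] at hc ⊢
          simp at hc ⊢
          omega
    · rintro ⟨hs, hc, hh⟩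
      obtain ⟨h, t, rfl⟩ := hh (by trivial)
      match h with
      | 0 =>
        left
        refine ⟨t, ?_, rfl⟩
        rw [ih1]
        simp only [List.sum_cons] at hs
        rw [List.count_cons] at hc
        simp at hc
        exact ⟨by omega, by omega, by simp⟩
      | h+1 =>
        right
        refine ⟨(h+1) :: t, ?_, rfl⟩
        rw [ih2]
        simp only [List.sum_cons] at hs
        rw [List.count_cons] at hc
        refine ⟨by simp only [List.sum_cons]; omega, ?_, fun _ => ⟨h, t, rfl⟩⟩
        rw [List.count_cons]
        simp at hc ⊢
        omega
  | case4 m ih =>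
    intro l
    rw [FS, ih]
    constructor
    · rintro ⟨hs, hc, hh⟩
      exact ⟨hs, hc, by simp⟩
    · rintro ⟨hs, hc, -⟩
      refine ⟨hs, hc, fun _ => ?_⟩
      match l with
      | [] => simp at hs
      | 0 :: t => rw [List.count_cons] at hc; simp at hc
      | (h+1) :: t => exact ⟨h, t, rfl⟩
  | case5 m k ih1 ih2 =>
    intro l
    rw [FS]
    simp only [Finset.mem_union, Finset.mem_image]
    constructor
    · rintro (⟨t, ht, rfl⟩ | hl)
      · rw [ih1] at ht
        refine ⟨by simp [ht.1], ?_, by simp⟩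
        rw [List.count_cons]
        simp [ht.2.1]
      · rw [ih2] at hl
        exact ⟨hl.1, hl.2.1, by simp⟩
    · rintro ⟨hs, hc, -⟩
      match l with
      | [] => simp at hc
      | 0 :: t =>
        left
        refine ⟨t, ?_, rfl⟩
        rw [ih1]
        simp only [List.sum_cons] at hs
        rw [List.count_cons] at hc
        simp at hc
        exact ⟨by omega, by omega, by simp⟩
      | (h+1) :: t =>
        right
        rw [ih2]
        exact ⟨hs, hc, fun _ => ⟨h, t, rfl⟩⟩

theorem card_FS : ∀ (m k : ℕ) (b : Bool),
    (FS m k b).card = if b then (Q (m+k) m).1 else (Q (m+k) m).2 := by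
  intro m k b
  induction m, k, b using FS.induct with
  | case1 k =>
    rw [FS]
    simp [Q_n0]
  | case2 k =>
    rw [FS]
    simp [Q_n0]
  | case3 m k ih1 ih2 =>
    rw [FS]
    have hd : Disjoint ((FS m k true).image (fun l => 1 :: l)) ((FS m k false).image incHead) := by
      rw [Finset.disjoint_left]
      rintro l hl1 hl2
      rw [Finset.mem_image] at hl1 hl2
      obtain ⟨t, _, rfl⟩ := hl1
      obtain ⟨l', hl', he⟩ := hl2
      rw [mem_FS] at hl'
      obtain ⟨h2, t2, rfl⟩ := hl'.2.2 rfl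
      simp only [incHead] at he
      have := congrArg List.head? he
      simp at this
    rw [Finset.card_union_of_disjoint hd]
    rw [Finset.card_image_of_injective _ (fun a b h => by injection h)]
    rw [Finset.card_image_of_injOn]
    · rw [ih1, ih2]
      norm_num
      have he : m + 1 + k = (m + k) + 1 := by omega
      rw [he]
      have hQ : Q ((m+k)+1) (m+1) = ((Q (m+k) (m+1)).1 + (Q (m+k) m).1 + (Q (m+k) m).2,
        (Q (m+k) m).1 + (Q (m+k) m).2) := rfl
      rw [hQ]
    · intro l1 h1 l2 h2 he
      rw [Finset.mem_coe, mem_FS] at h1 h2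
      obtain ⟨a1, t1, rfl⟩ := h1.2.2 (by trivial)
      obtain ⟨a2, t2, rfl⟩ := h2.2.2 (by trivial)
      simp only [incHead] at he
      injection he with he1 he2
      rw [he2]
      congr 1
      omega
  | case4 m ih =>
    rw [FS, ih]
    simp only [Nat.add_zero]
    norm_num
    have hQ : Q (m+1) (m+1) = ((Q m (m+1)).1 + (Q m m).1 + (Q m m).2,
      (Q m m).1 + (Q m m).2) := rfl
    rw [hQ, Q_zero m (m+1) (by omega)]
    simp
  | case5 m k ih1 ih2 =>
    rw [FS]
    have hd : Disjoint ((FS (m+1) k true).image (fun l => 0 :: l)) (FS (m+1) (k+1) false) := by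
      rw [Finset.disjoint_left]
      rintro l hl1 hl2
      rw [Finset.mem_image] at hl1
      obtain ⟨t, _, rfl⟩ := hl1
      rw [mem_FS] at hl2
      obtain ⟨h2, t2, he⟩ := hl2.2.2 rfl
      injection he with he1 he2
      omega
    rw [Finset.card_union_of_disjoint hd]
    rw [Finset.card_image_of_injective _ (fun a b h => by injection h)]
    rw [ih1, ih2]
    norm_num
    have e1 : m + 1 + (k+1) = (m + 1 + k) + 1 := by omega
    rw [e1]
    have hQ : Q ((m+1+k)+1) (m+1) = ((Q (m+1+k) (m+1)).1 + (Q (m+1+k) m).1 + (Q (m+1+k) m).2,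
      (Q (m+1+k) m).1 + (Q (m+1+k) m).2) := rfl
    rw [hQ]
    simp only
    have hQ2 : Q (m+1+k) (m+1) = Q ((m+k)+1) (m+1) := by rw [show m+1+k = (m+k)+1 from by omega]
    rw [hQ2]
    have hQ3 : Q ((m+k)+1) (m+1) = ((Q (m+k) (m+1)).1 + (Q (m+k) m).1 + (Q (m+k) m).2,
      (Q (m+k) m).1 + (Q (m+k) m).2) := rfl
    rw [hQ3]
    simp only
    omega


theorem aN_insert (n : ℕ) (S : Finset ℕ) (hS : S ⊆ Finset.range n) (hn : n ∉ S) :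
    aN (insert n S) = aN S + (if n - 1 ∈ S then 1 else 0) := by
  match n with
  | 0 =>
    have : S = ∅ := by
      rw [← Finset.subset_empty]
      simpa using hS
    subst this
    simp [aN]
  | n + 1 =>
    rw [aN]
    have hp : ¬ ((n+1) + 1 ∈ insert (n+1) S) := by
      rw [Finset.mem_insert]
      push_neg
      exact ⟨by omega, fun hmem => by have := hS hmem; simp at this⟩
    rw [Finset.filter_insert, if_neg hp]
    have hfe : S.filter (fun i => i + 1 ∈ insert (n+1) S)
        = S.filter (fun i => i + 1 = n + 1) ∪ S.filter (fun i => i + 1 ∈ S) := by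
      rw [← Finset.filter_or]
      apply Finset.filter_congr
      intro x _
      simp [Finset.mem_insert]
    rw [hfe, Finset.card_union_of_disjoint]
    · have h1 : S.filter (fun i => i + 1 = n + 1) = if n ∈ S then {n} else ∅ := by
        split_ifs with hmem
        · ext i
          simp only [Finset.mem_filter, Finset.mem_singleton]
          constructor
          · rintro ⟨hi, he⟩; omega
          · rintro rfl; exact ⟨hmem, rfl⟩
        · ext i
          simp only [Finset.mem_filter, Finset.notMem_empty, iff_false]
          rintro ⟨hi, he⟩
          have : i = n := by omega
          exact hmem (this ▸ hi)
      rw [h1]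
      simp only [Nat.add_sub_cancel]
      split_ifs with hmem <;> simp [aN, add_comm]
    · rw [Finset.disjoint_left]
      rintro i hi1 hi2
      rw [Finset.mem_filter] at hi1 hi2
      exact hn (hi1.2 ▸ hi2.2)



theorem subset_sum_Q (n : ℕ) : ∀ m : ℕ,
    (∑ S ∈ (Finset.range n).powersetCard m, 2 ^ aN S) = (Q n m).1 ∧
    (∑ S ∈ (Finset.range n).powersetCard m,
        (if n - 1 ∈ S then 2 ^ aN S else 0)) = (Q n m).2 := by
  induction n with
  | zero =>
    intro m
    match m with
    | 0 => simp [Q, aN]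
    | m + 1 => simp [Q]
  | succ n ih =>
    intro m
    match m with
    | 0 => simp [Q, aN]
    | m + 1 =>
      have hnot : n ∉ Finset.range n := by simp
      rw [Finset.range_add_one, Finset.powersetCard_succ_insert hnot]
      have hdisj : Disjoint ((Finset.range n).powersetCard (m+1))
          (Finset.image (insert n) ((Finset.range n).powersetCard m)) := by
        rw [Finset.disjoint_left]
        rintro S hS1 hS2
        rw [Finset.mem_powersetCard] at hS1
        rw [Finset.mem_image] at hS2
        obtain ⟨T, _, rfl⟩ := hS2
        have : n ∈ insert n T := Finset.mem_insert_self n T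
        have := hS1.1 this
        simp at this
      have hinj : ∀ S ∈ (Finset.range n).powersetCard m, ∀ T ∈ (Finset.range n).powersetCard m,
          insert n S = insert n T → S = T := by
        intro S hS T hT he
        rw [Finset.mem_powersetCard] at hS hT
        have hnS : n ∉ S := fun h => by have := hS.1 h; simp at this
        have hnT : n ∉ T := fun h => by have := hT.1 h; simp at this
        rw [← Finset.erase_insert hnS, ← Finset.erase_insert hnT, he]
      have hins : ∀ S ∈ (Finset.range n).powersetCard m,
          aN (insert n S) = aN S + (if n - 1 ∈ S then 1 else 0) := by
        intro S hS
        rw [Finset.mem_powersetCard] at hS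
        exact aN_insert n S hS.1 (fun h => by have := hS.1 h; simp at this)
      rw [Finset.sum_union hdisj, Finset.sum_union hdisj,
        Finset.sum_image hinj, Finset.sum_image hinj]
      have e1 : ∑ S ∈ (Finset.range n).powersetCard m, 2 ^ aN (insert n S)
          = (Q n m).1 + (Q n m).2 := by
        rw [← (ih m).1, ← (ih m).2, ← Finset.sum_add_distrib]
        apply Finset.sum_congr rfl
        intro S hS
        rw [hins S hS]
        split_ifs <;> ring
      constructor
      · rw [show Q (n+1) (m+1) = ((Q n (m+1)).1 + (Q n m).1 + (Q n m).2,
          (Q n m).1 + (Q n m).2) from rfl]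
        simp only
        rw [(ih (m+1)).1, e1]
        ring
      · rw [show Q (n+1) (m+1) = ((Q n (m+1)).1 + (Q n m).1 + (Q n m).2,
          (Q n m).1 + (Q n m).2) from rfl]
        simp only
        have e2 : ∑ S ∈ (Finset.range n).powersetCard (m+1),
            (if n + 1 - 1 ∈ S then 2 ^ aN S else 0) = 0 := by
          apply Finset.sum_eq_zero
          intro S hS
          rw [Finset.mem_powersetCard] at hS
          rw [if_neg]
          intro h
          have := hS.1 h
          simp at this
        have e3 : ∑ S ∈ (Finset.range n).powersetCard m,
            (if n + 1 - 1 ∈ insert n S then 2 ^ aN (insert n S) else 0)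
            = ∑ S ∈ (Finset.range n).powersetCard m, 2 ^ aN (insert n S) := by
          apply Finset.sum_congr rfl
          intro S hS
          rw [if_pos]
          simp
        rw [e2, e3, e1, zero_add]
/-- The number of weak compositions of `n - k` (lists of nonnegative integers
summing to `n - k`) with exactly `k` parts equal to `0` equals the sum of all
principal minors of order `n - k` of `F_{n,1}`. -/
theorem stmt18 (n k : ℕ) (hn : 0 < n) (hk : k ≤ n) :
    (Nat.card {l : List ℕ // l.sum = n - k ∧ l.count 0 = k} : ℤ) =
      ∑ s ∈ Finset.univ.powersetCard (n - k),
        Matrix.det (Matrix.of (fun a b : {x : Fin n // x ∈ s} => F1 n a.1 b.1)) := by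
  set m := n - k with hm
  have hmk : m + k = n := by omega
  have hL : Nat.card {l : List ℕ // l.sum = m ∧ l.count 0 = k} = (Q n m).1 := by
    have hsub : ∀ l : List ℕ, (l.sum = m ∧ l.count 0 = k) ↔ l ∈ FS m k true := by
      intro l
      rw [mem_FS]
      simp
    have : Nat.card {l : List ℕ // l.sum = m ∧ l.count 0 = k}
        = Nat.card {l : List ℕ // l ∈ FS m k true} :=
      Nat.card_congr (Equiv.subtypeEquivRight hsub)
    rw [this, Nat.card_eq_finsetCard (FS m k true), card_FS m k true, if_pos rfl, hmk]
  rw [hL, sum_minors n m]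
  rw [show (∑ S ∈ (Finset.range n).powersetCard m, ((2:ℤ) ^ aN S))
      = ((∑ S ∈ (Finset.range n).powersetCard m, 2 ^ aN S : ℕ) : ℤ) by push_cast; rfl]
  rw [(subset_sum_Q n m).1]
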